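/- Let CS_{a,b} = K_a ∨ (complement of K_b) be the complete split graph with a ≥ 1, b ≥ 2 and n = a + b vertices. Then for α ∈ [0,1] the spectrum of RD_α(CS_{a,b}) consists exactly of: the eigenvalue αn − 1 with multiplicity a−1, the eigenvalue (α(n+a)−1)/2 with multiplicity b−1, and the two eigenvalues [(α+1)n − ½b − 3/2 ± √(((α−1)(a−b) − ½b + ½)² + 4(1−α)²ab)] / 2. -/

import Mathlib

open Matrix BigOperators Finset

/-- The reciprocal distance (Harary) matrix of a graph. -/
noncomputable def RDmat {V : Type*} [Fintype V] [DecidableEq V] (G : SimpleGraph V) :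
    Matrix V V ℝ :=
  Matrix.of fun i j => if i = j then 0 else (1 : ℝ) / (G.dist i j)

/-- The reciprocal transmission of a vertex. -/
noncomputable def RTr {V : Type*} [Fintype V] [DecidableEq V] (G : SimpleGraph V) (v : V) : ℝ :=
  ∑ u ∈ Finset.univ.erase v, (1 : ℝ) / (G.dist u v)

/-- The generalized reciprocal distance matrix `RD_α(G) = α RT(G) + (1-α) RD(G)`. -/
noncomputable def RDalpha {V : Type*} [Fintype V] [DecidableEq V] (G : SimpleGraph V) (α : ℝ) :
    Matrix V V ℝ :=
  α • Matrix.diagonal (RTr G) + (1 - α) • RDmat G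

/-- The `i`-th largest eigenvalue (1-indexed, with multiplicity) of a real matrix,
obtained from the roots of its characteristic polynomial sorted decreasingly. -/
noncomputable def eigDesc {V : Type*} [Fintype V] [DecidableEq V] (M : Matrix V V ℝ) (i : ℕ) : ℝ :=
  ((M.charpoly.roots.sort (· ≤ ·)).reverse).getD (i - 1) 0

/-- The spectral radius (largest eigenvalue) of a real symmetric matrix. -/
noncomputable def specRadius {V : Type*} [Fintype V] [DecidableEq V] (M : Matrix V V ℝ) : ℝ :=
  eigDesc M 1

/-- The join of two graphs. -/
def gjoin {V₁ V₂ : Type*} (G₁ : SimpleGraph V₁) (G₂ : SimpleGraph V₂) :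
    SimpleGraph (V₁ ⊕ V₂) where
  Adj x y := match x, y with
    | Sum.inl a, Sum.inl b => G₁.Adj a b
    | Sum.inr a, Sum.inr b => G₂.Adj a b
    | Sum.inl _, Sum.inr _ => True
    | Sum.inr _, Sum.inl _ => True
  symm := ⟨by rintro (a|a) (b|b) h <;> first | exact G₁.symm h | exact G₂.symm h | exact G₁.adj_symm h | exact G₂.adj_symm h | trivial⟩
  loopless := ⟨by rintro (a|a) h <;> first | exact G₁.loopless a h | exact G₂.loopless a h | exact G₁.irrefl h | exact G₂.irrefl h⟩

section Helpers
open Polynomial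

/-- column matrix `Pm`. -/
noncomputable def Pm (m : ℕ) : Matrix (Fin (m+1)) (Fin (m+1)) ℝ :=
  Matrix.of fun i j => if j = 0 then 1 else if i = 0 then 1 else if i = j then -1 else 0

noncomputable def Qm (m : ℕ) : Matrix (Fin (m+1)) (Fin (m+1)) ℝ :=
  Matrix.of fun i j => ((m:ℝ)+1)⁻¹ - if i = j ∧ i ≠ 0 then 1 else 0

lemma Pm_apply_zero (m : ℕ) (i : Fin (m+1)) : Pm m i 0 = 1 := by simp [Pm]

lemma Pm_colsum (m : ℕ) (j : Fin (m+1)) :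
    ∑ k, Pm m k j = if j = 0 then (m:ℝ)+1 else 0 := by
  rcases eq_or_ne j 0 with h | h
  · subst h; simp [Pm]
  · rw [if_neg h]
    have : ∀ k : Fin (m+1), Pm m k j =
        (if k = 0 then (1:ℝ) else 0) + (if k = j then (-1:ℝ) else 0) := by
      intro k
      rcases eq_or_ne k 0 with rfl | hk
      · simp [Pm, h, Ne.symm h]
      · rcases eq_or_ne k j with rfl | hkj
        · simp [Pm, h, hk]
        · simp [Pm, h, hk, hkj]
    rw [Finset.sum_congr rfl fun k _ => this k, Finset.sum_add_distrib]
    simp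

lemma Pm_mul_Qm (m : ℕ) : Pm m * Qm m = 1 := by
  ext i j
  rw [Matrix.mul_apply]
  rcases eq_or_ne i 0 with rfl | hi
  · have : ∀ k : Fin (m+1), Pm m 0 k * Qm m k j = Qm m k j := by
      intro k; by_cases hk : k = 0 <;> simp [Pm, hk]
    rw [Finset.sum_congr rfl fun k _ => this k]
    have : ∀ k : Fin (m+1), Qm m k j =
        ((m:ℝ)+1)⁻¹ - (if k = j then (if j = 0 then 0 else 1) else 0) := by
      intro k
      rcases eq_or_ne k j with rfl | hkj
      · by_cases hk : k = 0 <;> simp [Qm, hk]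
      · simp [Qm, hkj]
    rw [Finset.sum_congr rfl fun k _ => this k, Finset.sum_sub_distrib]
    rcases eq_or_ne j 0 with rfl | hj
    · simp [Finset.card_univ, Matrix.one_apply]
      rw [mul_inv_cancel₀ (by positivity)]
    · simp [Matrix.one_apply, Ne.symm hj, hj, Finset.card_univ]
      field_simp
      norm_num
  · have : ∀ k : Fin (m+1), Pm m i k * Qm m k j =
        (if k = 0 then Qm m 0 j else 0) + (if k = i then -Qm m i j else 0) := by
      intro k
      rcases eq_or_ne k 0 with rfl | hk
      · simp [Pm, Ne.symm hi]
      · rcases eq_or_ne k i with rfl | hki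
        · simp [Pm, hk, hi]
        · simp [Pm, hk, hi, hki, Ne.symm hki]
    rw [Finset.sum_congr rfl fun k _ => this k, Finset.sum_add_distrib]
    simp only [Finset.sum_ite_eq', Finset.mem_univ, if_true]
    rcases eq_or_ne i j with rfl | hij
    · simp [Qm, hi, Matrix.one_apply]
    · simp [Qm, hi, hij, Matrix.one_apply, Ne.symm hi]


/-- matrix with constant `c` off pattern plus `d` on diagonal -/
noncomputable def CDmat (m : ℕ) (c d : ℝ) : Matrix (Fin (m+1)) (Fin (m+1)) ℝ :=
  Matrix.of fun i k => c + if k = i then d else 0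

/-- diagonal with top entry `t` and rest `d` -/
noncomputable def NDiag (m : ℕ) (t d : ℝ) : Matrix (Fin (m+1)) (Fin (m+1)) ℝ :=
  Matrix.of fun i j => if i = j then (if i = 0 then t else d) else 0

/-- corner matrix -/
noncomputable def NCorner (m k : ℕ) (e : ℝ) : Matrix (Fin (m+1)) (Fin (k+1)) ℝ :=
  Matrix.of fun i j => if i = 0 ∧ j = 0 then e else 0

lemma CDmat_mul_Pm (m : ℕ) (c d : ℝ) :
    CDmat m c d * Pm m = Pm m * NDiag m (c * ((m:ℝ)+1) + d) d := by
  ext i j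
  rw [Matrix.mul_apply, Matrix.mul_apply]
  have h1 : ∀ k, CDmat m c d i k * Pm m k j
      = c * Pm m k j + (if k = i then d * Pm m i j else 0) := by
    intro k
    by_cases hk : k = i <;> simp [CDmat, hk] <;> ring
  rw [Finset.sum_congr rfl fun k _ => h1 k, Finset.sum_add_distrib, ← Finset.mul_sum,
    Pm_colsum, Finset.sum_ite_eq' Finset.univ i]
  have h2 : ∀ k, Pm m i k * NDiag m (c * ((m:ℝ)+1) + d) d k j
      = if k = j then Pm m i j * (if j = 0 then c * ((m:ℝ)+1) + d else d) else 0 := by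
    intro k
    by_cases hk : k = j <;> simp [NDiag, hk]
  rw [Finset.sum_congr rfl fun k _ => h2 k, Finset.sum_ite_eq' Finset.univ j]
  rcases eq_or_ne j 0 with rfl | hj
  · simp [Pm_apply_zero]
  · simp [hj, mul_comm]

lemma const_mul_Pm (m k : ℕ) (c : ℝ) :
    (Matrix.of fun _ _ => c : Matrix (Fin (m+1)) (Fin (k+1)) ℝ) * Pm k
      = Pm m * NCorner m k (c * ((k:ℝ)+1)) := by
  ext i j
  rw [Matrix.mul_apply, Matrix.mul_apply]
  have h1 : ∀ x, (Matrix.of fun _ _ => c : Matrix (Fin (m+1)) (Fin (k+1)) ℝ) i x * Pm k x j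
      = c * Pm k x j := by intro x; simp
  rw [Finset.sum_congr rfl fun x _ => h1 x, ← Finset.mul_sum, Pm_colsum]
  have h2 : ∀ x, Pm m i x * NCorner m k (c * ((k:ℝ)+1)) x j
      = if x = 0 then (if j = 0 then c * ((k:ℝ)+1) else 0) else 0 := by
    intro x
    by_cases hx : x = (0 : Fin (m+1)) <;> by_cases hj : j = 0 <;>
      simp [NCorner, hx, hj, Pm_apply_zero]
  rw [Finset.sum_congr rfl fun x _ => h2 x, Finset.sum_ite_eq' Finset.univ 0]
  by_cases hj : j = 0 <;> simp [hj, mul_comm]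

lemma charpoly_of_conj {n : Type*} [Fintype n] [DecidableEq n]
    (M P Q N : Matrix n n ℝ) (hPQ : P * Q = 1) (h : M * P = P * N) :
    M.charpoly = N.charpoly := by
  classical
  set Pc := (C : ℝ →+* ℝ[X]).mapMatrix P with hPc
  set Qc := (C : ℝ →+* ℝ[X]).mapMatrix Q with hQc
  have hPQc : Pc * Qc = 1 := by
    rw [hPc, hQc, ← _root_.map_mul, hPQ, _root_.map_one]
  have key : charmatrix M * Pc = Pc * charmatrix N := by
    rw [charmatrix, charmatrix, sub_mul, mul_sub]
    congr 1
    · rw [scalar_commute _ (fun r => (Commute.all _ _)) _]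
    · rw [hPc, RingHom.mapMatrix_apply, RingHom.mapMatrix_apply, RingHom.mapMatrix_apply, ← Matrix.map_mul, ← Matrix.map_mul, h]
  have hdet : M.charpoly * Pc.det = Pc.det * N.charpoly := by
    rw [Matrix.charpoly, Matrix.charpoly, ← Matrix.det_mul, ← Matrix.det_mul, key]
  have hunit : Pc.det * Qc.det = 1 := by rw [← Matrix.det_mul, hPQc, Matrix.det_one]
  calc M.charpoly = M.charpoly * (Pc.det * Qc.det) := by rw [hunit, mul_one]
    _ = (Pc.det * N.charpoly) * Qc.det := by rw [← hdet]; ring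
    _ = N.charpoly * (Pc.det * Qc.det) := by ring
    _ = N.charpoly := by rw [hunit, mul_one]

lemma charpoly_fromBlocks_zero {n m : Type*} [Fintype n] [DecidableEq n]
    [Fintype m] [DecidableEq m] (A : Matrix n n ℝ) (B : Matrix n m ℝ) (D : Matrix m m ℝ) :
    (Matrix.fromBlocks A B 0 D).charpoly = A.charpoly * D.charpoly := by
  rw [Matrix.charpoly, charmatrix_fromBlocks]
  have : (0 : Matrix m n ℝ).map ⇑(C : ℝ →+* ℝ[X]) = 0 := Matrix.map_zero _ (map_zero C)
  rw [this, neg_zero, Matrix.det_fromBlocks_zero₂₁]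
  rfl

lemma charpoly_diag_two (m k : ℕ) (l1 l2 : ℝ) :
    (Matrix.diagonal (Sum.elim (fun _ : Fin m => l1) (fun _ : Fin k => l2))).charpoly
      = (X - C l1)^m * (X - C l2)^k := by
  rw [Matrix.charpoly]
  have : charmatrix (Matrix.diagonal (Sum.elim (fun _ : Fin m => l1) (fun _ : Fin k => l2)))
      = Matrix.diagonal (Sum.elim (fun _ : Fin m => X - C l1) (fun _ : Fin k => X - C l2)) := by
    ext i j
    rcases eq_or_ne i j with rfl | hij
    · rcases i with i | i <;> simp
    · rw [charmatrix_apply_ne _ _ _ hij, Matrix.diagonal_apply_ne _ hij,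
        Matrix.diagonal_apply_ne _ hij, map_zero, neg_zero]
  rw [this, Matrix.det_diagonal, Fintype.prod_sum_type]
  simp

/-- split equiv -/
def Esplit (a b : ℕ) : (Fin (a+1) ⊕ Fin (b+1)) ≃ (Fin 2 ⊕ (Fin a ⊕ Fin b)) where
  toFun x := match x with
    | Sum.inl i => Fin.cases (Sum.inl 0) (fun k => Sum.inr (Sum.inl k)) i
    | Sum.inr i => Fin.cases (Sum.inl 1) (fun k => Sum.inr (Sum.inr k)) i
  invFun x := match x with
    | Sum.inl t => if t = 0 then Sum.inl 0 else Sum.inr 0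
    | Sum.inr (Sum.inl k) => Sum.inl k.succ
    | Sum.inr (Sum.inr k) => Sum.inr k.succ
  left_inv := by
    rintro (i | i) <;> induction i using Fin.cases <;> simp
  right_inv := by
    rintro (t | k | k)
    · fin_cases t <;> simp
    · simp
    · simp

lemma reindex_N (a b : ℕ) (t1 l1 t2 l2 c12 c21 : ℝ) :
    Matrix.reindex (Esplit a b) (Esplit a b)
      (Matrix.fromBlocks (NDiag a t1 l1) (NCorner a b c12) (NCorner b a c21) (NDiag b t2 l2))
    = Matrix.fromBlocks !![t1, c12; c21, t2] 0 0
        (Matrix.diagonal (Sum.elim (fun _ : Fin a => l1) (fun _ : Fin b => l2))) := by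
  ext i j
  have hsz : ∀ {m : ℕ} (k : Fin m), ((0 : Fin (m+1)) = k.succ) = False := by
    intro m k; simp [eq_comm, Fin.succ_ne_zero]
  rcases i with t | k | k <;> rcases j with s | l | l
  · fin_cases t <;> fin_cases s <;>
      simp [Esplit, NDiag, NCorner]
  · fin_cases t <;>
      simp [Esplit, NDiag, NCorner, Matrix.diagonal, hsz, Fin.succ_ne_zero]
  · fin_cases t <;>
      simp [Esplit, NDiag, NCorner, Matrix.diagonal, hsz, Fin.succ_ne_zero]
  · fin_cases s <;>
      simp [Esplit, NDiag, NCorner, Matrix.diagonal, hsz, Fin.succ_ne_zero]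
  · simp [Esplit, NDiag, NCorner, Matrix.diagonal, Fin.succ_ne_zero,
      (Fin.succ_injective _).eq_iff]
  · simp [Esplit, NDiag, NCorner, Matrix.diagonal]
  · fin_cases s <;>
      simp [Esplit, NDiag, NCorner, Matrix.diagonal, hsz, Fin.succ_ne_zero]
  · simp [Esplit, NDiag, NCorner, Matrix.diagonal]
  · simp [Esplit, NDiag, NCorner, Matrix.diagonal, Fin.succ_ne_zero,
      (Fin.succ_injective _).eq_iff]

lemma charpoly_two (p q r s u v : ℝ) (hsum : p + s = u + v) (hprod : p*s - q*r = u*v) :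
    (!![p, q; r, s] : Matrix (Fin 2) (Fin 2) ℝ).charpoly = (X - C u) * (X - C v) := by
  rw [Matrix.charpoly, Matrix.det_fin_two]
  have h00 : charmatrix !![p, q; r, s] 0 0 = X - C p := by
    rw [charmatrix_apply_eq]; norm_num
  have h11 : charmatrix !![p, q; r, s] 1 1 = X - C s := by
    rw [charmatrix_apply_eq]; norm_num
  have h01 : charmatrix !![p, q; r, s] 0 1 = - C q := by
    rw [charmatrix_apply_ne _ _ _ (by norm_num)]; norm_num
  have h10 : charmatrix !![p, q; r, s] 1 0 = - C r := by
    rw [charmatrix_apply_ne _ _ _ (by norm_num)]; norm_num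
  rw [h00, h11, h01, h10]
  have e1 : C p + C s = C u + C v := by rw [← map_add, ← map_add, hsum]
  have e2 : C p * C s - C q * C r = C u * C v := by
    rw [← _root_.map_mul, ← _root_.map_mul, ← _root_.map_mul, ← map_sub, hprod]
  linear_combination (-(X : ℝ[X])) * e1 + e2

section Graph
variable {a b : ℕ}

abbrev CSG (a b : ℕ) := gjoin (⊤ : SimpleGraph (Fin a)) (⊥ : SimpleGraph (Fin b))
lemma dist_ll (ha : 1 ≤ a) {i j : Fin a} (h : i ≠ j) :
    (CSG a b).dist (Sum.inl i) (Sum.inl j) = 1 :=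
  SimpleGraph.dist_eq_one_iff_adj.mpr (by exact h)

lemma dist_lr (i : Fin a) (j : Fin b) :
    (CSG a b).dist (Sum.inl i) (Sum.inr j) = 1 :=
  SimpleGraph.dist_eq_one_iff_adj.mpr (by exact trivial)

lemma dist_rl (i : Fin b) (j : Fin a) :
    (CSG a b).dist (Sum.inr i) (Sum.inl j) = 1 :=
  SimpleGraph.dist_eq_one_iff_adj.mpr (by exact trivial)

lemma sum_ite_ne {m : ℕ} (i : Fin m) (c : ℝ) :
    ∑ j : Fin m, (if j = i then 0 else c) = (m : ℝ) * c - c := by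
  have : ∀ j : Fin m, (if j = i then (0:ℝ) else c) = c - (if j = i then c else 0) := by
    intro j; by_cases hj : j = i <;> simp [hj]
  rw [Finset.sum_congr rfl fun j _ => this j, Finset.sum_sub_distrib]
  simp [Finset.card_univ, mul_comm]

lemma dist_rr (ha : 1 ≤ a) {i j : Fin b} (h : i ≠ j) :
    (CSG a b).dist (Sum.inr i) (Sum.inr j) = 2 := by
  have z : Fin a := ⟨0, ha⟩
  let w : (CSG a b).Walk (Sum.inr i) (Sum.inr j) :=
    SimpleGraph.Walk.cons (by exact trivial : (CSG a b).Adj (Sum.inr i) (Sum.inl z))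
      (SimpleGraph.Walk.cons (by exact trivial) SimpleGraph.Walk.nil)
  have hlen : w.length = 2 := by rfl
  have h2 : (CSG a b).dist (Sum.inr i) (Sum.inr j) ≤ 2 :=
    hlen ▸ SimpleGraph.dist_le w
  have h0 : 0 < (CSG a b).dist (Sum.inr i) (Sum.inr j) :=
    SimpleGraph.Reachable.pos_dist_of_ne ⟨w⟩ (by simp [h])
  have h1 : (CSG a b).dist (Sum.inr i) (Sum.inr j) ≠ 1 := by
    rw [ne_eq, SimpleGraph.dist_eq_one_iff_adj]
    exact fun hadj => hadj
  omega

lemma RTr_l (ha : 1 ≤ a) (i : Fin a) :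
    RTr (CSG a b) (Sum.inl i) = (a : ℝ) + b - 1 := by
  rw [RTr, Finset.sum_erase_eq_sub (Finset.mem_univ _)]
  rw [SimpleGraph.dist_self]
  push_cast
  rw [Fintype.sum_sum_type]
  have h1 : ∀ j : Fin a, (1:ℝ) / ((CSG a b).dist (Sum.inl j) (Sum.inl i)) =
      if j = i then 0 else 1 := by
    intro j
    rcases eq_or_ne j i with rfl | hj
    · simp [SimpleGraph.dist_self]
    · rw [dist_ll ha hj]; simp [hj]
  have h2 : ∀ j : Fin b, (1:ℝ) / ((CSG a b).dist (Sum.inr j) (Sum.inl i)) = 1 := by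
    intro j; rw [dist_rl]; simp
  rw [Finset.sum_congr rfl fun j _ => h1 j, Finset.sum_congr rfl fun j _ => h2 j,
    sum_ite_ne]
  simp [Finset.card_univ]
  ring

lemma RTr_r (ha : 1 ≤ a) (hb : 1 ≤ b) (i : Fin b) :
    RTr (CSG a b) (Sum.inr i) = (a : ℝ) + ((b : ℝ) - 1)/2 := by
  rw [RTr, Finset.sum_erase_eq_sub (Finset.mem_univ _)]
  rw [SimpleGraph.dist_self]
  push_cast
  rw [Fintype.sum_sum_type]
  have h1 : ∀ j : Fin a, (1:ℝ) / ((CSG a b).dist (Sum.inl j) (Sum.inr i)) = 1 := by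
    intro j; rw [dist_lr]; simp
  have h2 : ∀ j : Fin b, (1:ℝ) / ((CSG a b).dist (Sum.inr j) (Sum.inr i)) =
      if j = i then 0 else 1/2 := by
    intro j
    rcases eq_or_ne j i with rfl | hj
    · simp [SimpleGraph.dist_self]
    · rw [dist_rr ha hj]; norm_num [hj]
  rw [Finset.sum_congr rfl fun j _ => h1 j, Finset.sum_congr rfl fun j _ => h2 j,
    sum_ite_ne]
  simp [Finset.card_univ]
  ring
end Graph

end Helpers

open Polynomial in
/-- Corollary 2.4: the spectrum of `RD_α(CS_{a,b})` for the complete split graph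
`CS_{a,b} = K_a ∨ (complement of K_b)`. -/
theorem stmt2 (a b : ℕ) (ha : 1 ≤ a) (hb : 2 ≤ b) (α : ℝ) (hα : α ∈ Set.Icc (0 : ℝ) 1) :
    (RDalpha (gjoin (⊤ : SimpleGraph (Fin a)) (⊥ : SimpleGraph (Fin b))) α).charpoly.roots =
      Multiset.replicate (a - 1) (α * ((a : ℝ) + b) - 1)
      + Multiset.replicate (b - 1) ((α * (((a : ℝ) + b) + a) - 1) / 2)
      + {((α + 1) * ((a : ℝ) + b) - (b : ℝ) / 2 - 3 / 2
            + Real.sqrt (((α - 1) * ((a : ℝ) - b) - (b : ℝ) / 2 + 1 / 2) ^ 2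
                + 4 * (1 - α) ^ 2 * a * b)) / 2,
         ((α + 1) * ((a : ℝ) + b) - (b : ℝ) / 2 - 3 / 2
            - Real.sqrt (((α - 1) * ((a : ℝ) - b) - (b : ℝ) / 2 + 1 / 2) ^ 2
                + 4 * (1 - α) ^ 2 * a * b)) / 2} := by
  obtain ⟨hα0, hα1⟩ := hα
  obtain ⟨a', rfl⟩ : ∃ a', a = a' + 1 := ⟨a - 1, by omega⟩
  obtain ⟨b', rfl⟩ : ∃ b', b = b' + 1 := ⟨b - 1, by omega⟩
  set aR : ℝ := ((a' + 1 : ℕ) : ℝ) with haR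
  set bR : ℝ := ((b' + 1 : ℕ) : ℝ) with hbR
  set sD : ℝ := Real.sqrt (((α - 1) * (aR - bR) - bR / 2 + 1 / 2) ^ 2
      + 4 * (1 - α) ^ 2 * aR * bR) with hsD
  set l1 : ℝ := α * (aR + bR) - 1 with hl1
  set l2 : ℝ := (α * ((aR + bR) + aR) - 1) / 2 with hl2
  set rp : ℝ := ((α + 1) * (aR + bR) - bR / 2 - 3 / 2 + sD) / 2 with hrp
  set rm : ℝ := ((α + 1) * (aR + bR) - bR / 2 - 3 / 2 - sD) / 2 with hrm
  set t1 : ℝ := (1 - α) * ((a' : ℝ) + 1) + l1 with ht1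
  set c12 : ℝ := (1 - α) * ((b' : ℝ) + 1) with hc12
  set c21 : ℝ := (1 - α) * ((a' : ℝ) + 1) with hc21
  set t2 : ℝ := (1 - α) / 2 * ((b' : ℝ) + 1) + l2 with ht2
  -- Step 1: explicit form of the matrix
  have M_eq : RDalpha (gjoin (⊤ : SimpleGraph (Fin (a'+1))) (⊥ : SimpleGraph (Fin (b'+1)))) α
      = Matrix.fromBlocks (CDmat a' (1-α) l1) (Matrix.of fun _ _ => (1-α))
          (Matrix.of fun _ _ => (1-α)) (CDmat b' ((1-α)/2) l2) := by
    have ha1 : 1 ≤ a' + 1 := Nat.le_add_left 1 a'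
    have hb1 : 1 ≤ b' + 1 := Nat.le_add_left 1 b'
    ext i j
    rcases i with i | i <;> rcases j with j | j
    · rcases eq_or_ne i j with rfl | hij
      · simp only [RDalpha, RDmat, Matrix.add_apply, Matrix.smul_apply,
          Matrix.diagonal_apply_eq, Matrix.of_apply, smul_eq_mul, if_pos rfl,
          Matrix.fromBlocks_apply₁₁, CDmat]
        rw [RTr_l ha1, hl1, haR, hbR]
        push_cast; ring
      · have hne : (Sum.inl i : Fin (a'+1) ⊕ Fin (b'+1)) ≠ Sum.inl j := by simp [hij]
        simp only [RDalpha, RDmat, Matrix.add_apply, Matrix.smul_apply,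
          Matrix.diagonal_apply_ne _ hne, Matrix.of_apply, smul_eq_mul,
          if_neg hne, Matrix.fromBlocks_apply₁₁, CDmat]
        rw [dist_ll ha1 hij]
        simp [Ne.symm hij]
    · have hne : (Sum.inl i : Fin (a'+1) ⊕ Fin (b'+1)) ≠ Sum.inr j := by simp
      simp only [RDalpha, RDmat, Matrix.add_apply, Matrix.smul_apply,
        Matrix.diagonal_apply_ne _ hne, Matrix.of_apply, smul_eq_mul,
        if_neg hne, Matrix.fromBlocks_apply₁₂]
      rw [dist_lr]
      simp
    · have hne : (Sum.inr i : Fin (a'+1) ⊕ Fin (b'+1)) ≠ Sum.inl j := by simp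
      simp only [RDalpha, RDmat, Matrix.add_apply, Matrix.smul_apply,
        Matrix.diagonal_apply_ne _ hne, Matrix.of_apply, smul_eq_mul,
        if_neg hne, Matrix.fromBlocks_apply₂₁]
      rw [dist_rl]
      simp
    · rcases eq_or_ne i j with rfl | hij
      · simp only [RDalpha, RDmat, Matrix.add_apply, Matrix.smul_apply,
          Matrix.diagonal_apply_eq, Matrix.of_apply, smul_eq_mul, if_pos rfl,
          Matrix.fromBlocks_apply₂₂, CDmat]
        rw [RTr_r ha1 hb1, hl2, haR, hbR]
        push_cast; ring
      · have hne : (Sum.inr i : Fin (a'+1) ⊕ Fin (b'+1)) ≠ Sum.inr j := by simp [hij]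
        simp only [RDalpha, RDmat, Matrix.add_apply, Matrix.smul_apply,
          Matrix.diagonal_apply_ne _ hne, Matrix.of_apply, smul_eq_mul,
          if_neg hne, Matrix.fromBlocks_apply₂₂, CDmat]
        rw [dist_rr ha1 hij]
        simp [Ne.symm hij]
        ring
  -- Step 2: conjugation
  have hPQ : (Matrix.fromBlocks (Pm a') 0 0 (Pm b')) * (Matrix.fromBlocks (Qm a') 0 0 (Qm b'))
      = (1 : Matrix (Fin (a'+1) ⊕ Fin (b'+1)) (Fin (a'+1) ⊕ Fin (b'+1)) ℝ) := by
    rw [Matrix.fromBlocks_multiply]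
    simp [Pm_mul_Qm, Matrix.fromBlocks_one]
  have hMP : (Matrix.fromBlocks (CDmat a' (1-α) l1) (Matrix.of fun _ _ => (1-α))
          (Matrix.of fun _ _ => (1-α)) (CDmat b' ((1-α)/2) l2))
        * (Matrix.fromBlocks (Pm a') 0 0 (Pm b'))
      = (Matrix.fromBlocks (Pm a') 0 0 (Pm b'))
        * (Matrix.fromBlocks (NDiag a' t1 l1) (NCorner a' b' c12)
            (NCorner b' a' c21) (NDiag b' t2 l2)) := by
    rw [Matrix.fromBlocks_multiply, Matrix.fromBlocks_multiply, ht1, ht2, hc12, hc21]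
    simp only [Matrix.mul_zero, Matrix.zero_mul, add_zero, zero_add,
      CDmat_mul_Pm, const_mul_Pm]
  have hcp : (RDalpha (gjoin (⊤ : SimpleGraph (Fin (a'+1)))
        (⊥ : SimpleGraph (Fin (b'+1)))) α).charpoly
      = (Matrix.fromBlocks (NDiag a' t1 l1) (NCorner a' b' c12)
          (NCorner b' a' c21) (NDiag b' t2 l2)).charpoly := by
    rw [M_eq]
    exact charpoly_of_conj _ _ _ _ hPQ hMP
  -- Step 3: compute the characteristic polynomial
  have hsq : sD ^ 2 = ((α - 1) * (aR - bR) - bR / 2 + 1 / 2) ^ 2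
      + 4 * (1 - α) ^ 2 * aR * bR := by
    rw [hsD]; exact Real.sq_sqrt (by positivity)
  have hsum : t1 + t2 = rp + rm := by
    rw [ht1, ht2, hrp, hrm, hl1, hl2, haR, hbR]
    push_cast; ring
  have hprod : t1 * t2 - c12 * c21 = rp * rm := by
    rw [haR, hbR] at hsq
    rw [ht1, ht2, hc12, hc21, hrp, hrm, hl1, hl2, haR, hbR]
    linear_combination (norm := (push_cast; ring1)) (1/4 : ℝ) * hsq
  have key : (RDalpha (gjoin (⊤ : SimpleGraph (Fin (a'+1)))
        (⊥ : SimpleGraph (Fin (b'+1)))) α).charpoly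
      = ((X - C rp) * (X - C rm)) * ((X - C l1)^a' * (X - C l2)^b') := by
    rw [hcp, ← Matrix.charpoly_reindex (Esplit a' b'), reindex_N,
      charpoly_fromBlocks_zero, charpoly_diag_two, charpoly_two t1 c12 c21 t2 rp rm hsum hprod]
  -- Step 4: roots
  rw [key]
  have mrp := Polynomial.monic_X_sub_C rp
  have mrm := Polynomial.monic_X_sub_C rm
  have ml1 := (Polynomial.monic_X_sub_C l1).pow a'
  have ml2 := (Polynomial.monic_X_sub_C l2).pow b'
  rw [Polynomial.roots_mul (((mrp.mul mrm).mul (ml1.mul ml2)).ne_zero),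
    Polynomial.roots_mul ((mrp.mul mrm).ne_zero),
    Polynomial.roots_mul ((ml1.mul ml2).ne_zero),
    Polynomial.roots_pow, Polynomial.roots_pow,
    Polynomial.roots_X_sub_C, Polynomial.roots_X_sub_C,
    Polynomial.roots_X_sub_C, Polynomial.roots_X_sub_C,
    Multiset.nsmul_singleton, Multiset.nsmul_singleton]
  simp only [Nat.add_sub_cancel]
  rw [Multiset.insert_eq_cons, ← Multiset.singleton_add]
  abel
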